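/- The tensor product of processes is injective up to weak bisimulation: if P₁ ⊗ P₂ is weakly bisimilar to Q₁ ⊗ Q₂ then P₁ is weakly bisimilar to Q₁ and P₂ is weakly bisimilar to Q₂. -/

import Mathlib

set_option linter.unnecessarySeqFocus false

/-! # CCS with simultaneous actions (Abramsky, "Process Realizability") -/

/-- Labels: names (`inl`) and co-names (`inr`). -/
abbrev Label : Type := ℕ ⊕ ℕ

/-- The involution `λ ↦ λ̄` exchanging names and co-names. -/
def Label.bar : Label → Label
  | .inl n => .inr n
  | .inr n => .inl n

/-- Actions: finite sets of labels, performed simultaneously.  `τ = ∅`. -/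
abbrev Act : Type := Finset Label

/-- A renaming: a partial injective function on labels preserving the involution. -/
structure Renaming where
  toFun : Label → Option Label
  inj : ∀ ⦃x y z : Label⦄, toFun x = some z → toFun y = some z → x = y
  bar : ∀ x : Label, toFun (Label.bar x) = (toFun x).map Label.bar

/-- The pointwise extension of a renaming to actions. -/
def Renaming.onAction (f : Renaming) (a : Act) : Act :=
  a.filterMap f.toFun (fun _ _ _ hx hy => f.inj (Option.mem_def.mp hx) (Option.mem_def.mp hy))

/-- Guarded process terms of CCS with simultaneous actions:
prefix, countably-indexed guarded sums (all guards non-`τ`), parallel composition,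
restriction, renaming, process variables (de Bruijn) and recursion. -/
inductive Proc : Type where
  | pre (a : Act) (P : Proc)
  | sum (I : Set ℕ) (act : ℕ → Act) (cont : ℕ → Proc) (hg : ∀ n ∈ I, (act n).Nonempty)
  | par (P Q : Proc)
  | restrict (P : Proc) (L : Set Label)
  | rename (P : Proc) (f : Renaming)
  | var (n : ℕ)
  | fix (P : Proc)

/-- The inactive process `0` (the empty sum). -/
def Proc.nil : Proc := .sum ∅ (fun _ => ∅) (fun _ => .var 0) (by simp)

/-- Substitution of a process for the variable with de Bruijn index `d`. -/
def Proc.subst (R : Proc) : ℕ → Proc → Proc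
  | d, .pre a P => .pre a (Proc.subst R d P)
  | d, .sum I act cont hg => .sum I act (fun n => Proc.subst R d (cont n)) hg
  | d, .par P Q => .par (Proc.subst R d P) (Proc.subst R d Q)
  | d, .restrict P L => .restrict (Proc.subst R d P) L
  | d, .rename P f => .rename (Proc.subst R d P) f
  | d, .var n => if n = d then R else .var n
  | d, .fix P => .fix (Proc.subst R (d + 1) P)

/-- The labelled transition relation, with the generalized synchronization rule
for simultaneous (compound) actions. -/
inductive Step : Proc → Act → Proc → Prop where
  | pre {a P} : Step (.pre a P) a P
  | sum {I act cont hg} (j : ℕ) (hj : j ∈ I) : Step (.sum I act cont hg) (act j) (cont j)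
  | restrict {P a Q L} : Step P a Q → (∀ l ∈ a, l ∉ L ∧ Label.bar l ∉ L) →
      Step (.restrict P L) a (.restrict Q L)
  | rename {P a Q} {f : Renaming} : Step P a Q → (∀ l ∈ a, (f.toFun l).isSome) →
      Step (.rename P f) (f.onAction a) (.rename Q f)
  | fix {P a Q} : Step (Proc.subst (.fix P) 0 P) a Q → Step (.fix P) a Q
  | parL {P a P' Q} : Step P a P' → Step (.par P Q) a (.par P' Q)
  | parR {P Q a Q'} : Step Q a Q' → Step (.par P Q) a (.par P Q')
  | sync {P Q P' Q' a b c} : Step P (a ∪ b) P' → Step Q (b.image Label.bar ∪ c) Q' →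
      Disjoint a b → Disjoint (b.image Label.bar) c → Disjoint a c →
      Step (.par P Q) (a ∪ c) (.par P' Q')

/-- Zero or more silent (`τ`) transitions. -/
def TauStar : Proc → Proc → Prop :=
  Relation.ReflTransGen (fun P Q => Step P ∅ Q)

/-- Observable transition `P ⟹a Q`: `τ* a τ*`. -/
def Obs (P : Proc) (a : Act) (Q : Proc) : Prop :=
  ∃ P₁ P₂, TauStar P P₁ ∧ Step P₁ a P₂ ∧ TauStar P₂ Q

/-- Observable transitions along a string of (non-`τ`) actions. -/
inductive ObsSeq : Proc → List Act → Proc → Prop where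
  | nil {P Q} : TauStar P Q → ObsSeq P [] Q
  | cons {P a Q s R} : Obs P a Q → ObsSeq Q s R → ObsSeq P (a :: s) R

/-- The failures of a process: pairs `(s, X)` with `s` a string of nonempty actions and
`X` a set of nonempty actions such that `P ⟹s Q` for some `Q` refusing every action of `X`. -/
def failures (P : Proc) : Set (List Act × Set Act) :=
  { sX | (∀ a ∈ sX.1, a.Nonempty) ∧ (∀ a ∈ sX.2, a.Nonempty) ∧
      ∃ Q, ObsSeq P sX.1 Q ∧ ∀ a ∈ sX.2, ¬∃ R, Obs Q a R }

/-- Failures equivalence. -/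
def FailEq (P Q : Proc) : Prop := failures P = failures Q

/-- Weak simulations (with respect to the observable transitions). -/
def IsWeakSim (R : Proc → Proc → Prop) : Prop :=
  ∀ ⦃P Q⦄, R P Q →
    (∀ P', TauStar P P' → ∃ Q', TauStar Q Q' ∧ R P' Q') ∧
    (∀ a P', (a : Act).Nonempty → Obs P a P' → ∃ Q', Obs Q a Q' ∧ R P' Q')

/-- Weak bisimilarity. -/
def WeakBisim (P Q : Proc) : Prop :=
  ∃ R : Proc → Proc → Prop, IsWeakSim R ∧ IsWeakSim (fun x y => R y x) ∧ R P Q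
/-! ## The split name space and the basic combinators -/

/-- Build a bar-preserving partial injective renaming from a partial injective map on names. -/
def Renaming.ofNameFun (f : ℕ → Option ℕ)
    (hf : ∀ ⦃x y z : ℕ⦄, f x = some z → f y = some z → x = y) : Renaming where
  toFun := fun l =>
    match l with
    | .inl n => (f n).map .inl
    | .inr n => (f n).map .inr
  inj := by
    rintro (x | x) (y | y) (z | z) hx hy <;>
      simp only [Option.map_eq_some_iff] at hx hy <;>
      obtain ⟨a, ha, ha'⟩ := hx <;> obtain ⟨b, hb, hb'⟩ := hy <;>
        solve
          | (cases ha'; cases hb'; exact congrArg _ (hf ha hb))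
          | (cases hb')
          | (cases ha')
  bar := by
    rintro (n | n) <;> cases hf : f n <;> simp [Label.bar, hf]

/-- The underlying name of a label. -/
def Label.name : Label → ℕ := Sum.elim id id

/-- The injection `l` of the name space onto its "left" half (even names). -/
def lRen : Renaming := Renaming.ofNameFun (fun n => some (2 * n)) (by intro x y z hx hy; simp only [Option.some.injEq] at hx hy; omega)

/-- The injection `r` of the name space onto its "right" half (odd names). -/
def rRen : Renaming := Renaming.ofNameFun (fun n => some (2 * n + 1)) (by intro x y z hx hy; simp only [Option.some.injEq] at hx hy; omega)

/-- The partial inverse `l⁻¹` of `l`. -/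
def lInv : Renaming :=
  Renaming.ofNameFun (fun n => if n % 2 = 0 then some (n / 2) else none)
    (by intro x y z hx hy; try dsimp only at hx hy
        split at hx <;> split at hy <;> simp_all <;> omega)

/-- The partial inverse `r⁻¹` of `r`. -/
def rInv : Renaming :=
  Renaming.ofNameFun (fun n => if n % 2 = 1 then some (n / 2) else none)
    (by intro x y z hx hy; try dsimp only at hx hy
        split at hx <;> split at hy <;> simp_all <;> omega)

/-- The left half `ℒ_l` of the label space. -/
def LabL : Set Label := {x | x.name % 2 = 0}

/-- The right half `ℒ_r` of the label space. -/
def LabR : Set Label := {x | x.name % 2 = 1}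

/-- Tensor product: disjoint (non-communicating) parallel composition `P[l] | Q[r]`. -/
def tensor (P Q : Proc) : Proc := .par (P.rename lRen) (Q.rename rRen)

/-- Left (forwards) application `⟨Q | P⟩ = ((Q[l] | P) ∖ ℒ_l)[r⁻¹]`. -/
def lapp (Q P : Proc) : Proc := ((Proc.par (Q.rename lRen) P).restrict LabL).rename rInv

/-- Right (reverse) application `(P | R⟩ = ((P | R[r]) ∖ ℒ_r)[l⁻¹]`. -/
def rapp (P R : Proc) : Proc := ((Proc.par P (R.rename rRen)).restrict LabR).rename lInv

/-! ### The three-fold decomposition `𝒩 = 𝒩₁ ∪̇ 𝒩₂ ∪̇ 𝒩₃` and composition -/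

/-- `φ₁₂ : 𝒩 ≅ 𝒩₁ ∪̇ 𝒩₂` (`𝒩ᵢ` = names `≡ i - 1 (mod 3)`), carrying `𝒩_l` onto `𝒩₁`, `𝒩_r` onto `𝒩₂`. -/
def phi12 : Renaming :=
  Renaming.ofNameFun (fun n => some (if n % 2 = 0 then 3 * (n / 2) else 3 * (n / 2) + 1))
    (by intro x y z hx hy; try dsimp only at hx hy
        simp only [Option.some.injEq] at hx hy
        split at hx <;> split at hy <;> omega)

/-- `φ₂₃ : 𝒩 ≅ 𝒩₂ ∪̇ 𝒩₃`, carrying `𝒩_l` onto `𝒩₂`, `𝒩_r` onto `𝒩₃`. -/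
def phi23 : Renaming :=
  Renaming.ofNameFun (fun n => some (if n % 2 = 0 then 3 * (n / 2) + 1 else 3 * (n / 2) + 2))
    (by intro x y z hx hy; try dsimp only at hx hy
        simp only [Option.some.injEq] at hx hy
        split at hx <;> split at hy <;> omega)

/-- The partial inverse `φ₁₃⁻¹` of `φ₁₃ : 𝒩 ≅ 𝒩₁ ∪̇ 𝒩₃`. -/
def phi13Inv : Renaming :=
  Renaming.ofNameFun
    (fun n => if n % 3 = 0 then some (2 * (n / 3)) else if n % 3 = 2 then some (2 * (n / 3) + 1) else none)
    (by intro x y z hx hy; try dsimp only at hx hy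
        split at hx <;> split at hy <;> simp_all <;> omega)

/-- The middle part `𝒩₂` of the label space (as a set of labels). -/
def Lab2 : Set Label := {x | x.name % 3 = 1}

/-- Composition `P ; Q = ((P[φ₁₂] | Q[φ₂₃]) ∖ 𝒩₂)[φ₁₃⁻¹]`. -/
def comp (P Q : Proc) : Proc :=
  ((Proc.par (P.rename phi12) (Q.rename phi23)).restrict Lab2).rename phi13Inv

/-! ### The identity (wire) process -/

/-- The identity process `I = rec X. Σ_{a ∈ Act₊} (l(a) ∪ r(a)‾).X`. -/
noncomputable def Iproc : Proc :=
  .fix (.sum {n | ∃ a : Act, (Encodable.decode n : Option Act) = some a ∧ a.Nonempty}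
    (fun n =>
      match (Encodable.decode n : Option Act) with
      | some a => lRen.onAction a ∪ (rRen.onAction a).image Label.bar
      | none => {Sum.inl 0})
    (fun _ => .var 0)
    (by rintro n ⟨a, ha, hne⟩
        simp only [ha]
        obtain ⟨x, hx⟩ := hne
        refine Finset.Nonempty.mono Finset.subset_union_left ⟨(Sum.map (2 * ·) (2 * ·)) x, ?_⟩
        simp only [Renaming.onAction, Finset.mem_filterMap]
        exact ⟨x, hx, by cases x <;> rfl⟩))

/-! ## Guarded choice combinators, the additive pairing and injections, `!P`, divergence -/

/-- Binary guarded sum `a.P + b.Q` (guards must be non-`τ`). -/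
def gsum2 (a : Act) (P : Proc) (b : Act) (Q : Proc) (ha : a.Nonempty) (hb : b.Nonempty) : Proc :=
  .sum {0, 1} (fun n => if n = 0 then a else b) (fun n => if n = 0 then P else Q)
    (by intro n _; (try dsimp only); split <;> assumption)

/-- Ternary guarded sum `a.P + b.Q + c.R`. -/
def gsum3 (a : Act) (P : Proc) (b : Act) (Q : Proc) (c : Act) (R : Proc)
    (ha : a.Nonempty) (hb : b.Nonempty) (hc : c.Nonempty) : Proc :=
  .sum {0, 1, 2} (fun n => if n = 0 then a else if n = 1 then b else c)
    (fun n => if n = 0 then P else if n = 1 then Q else R)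
    (by intro n _; (try dsimp only); split <;> [skip; split] <;> assumption)

/-- The distinguished names: `α = 0`, `β = 1`, `ω = 2`, `δ = 3`, `γ = 4`, `σ = 5`. -/
def αAct : Act := {Sum.inl 0}
def βAct : Act := {Sum.inl 1}
def αBar : Act := {Sum.inr 0}
def βBar : Act := {Sum.inr 1}
def ωAct : Act := {Sum.inl 2}
def δBar : Act := {Sum.inr 3}
def γBar : Act := {Sum.inr 4}

/-- The additive pairing `⟨P, Q⟩ = r(α).P + r(β).Q`  (`r(α) = 1`, `r(β) = 3`). -/
def pairR (P Q : Proc) : Proc :=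
  gsum2 {Sum.inl 1} P {Sum.inl 3} Q (Finset.singleton_nonempty _) (Finset.singleton_nonempty _)

/-- The plain additive pairing `α.P + β.Q` used in the realizability clauses for `&`. -/
def pairProc (P Q : Proc) : Proc :=
  gsum2 αAct P βAct Q (Finset.singleton_nonempty _) (Finset.singleton_nonempty _)

/-- The left injection `l(P) = l(α)‾.P`  (`l(α) = 0`). -/
def injl (P : Proc) : Proc := .pre {Sum.inr 0} P

/-- The right injection `r(Q) = r(β)‾.Q`  (`r(β) = 3`). -/
def injr (Q : Proc) : Proc := .pre {Sum.inr 3} Q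

/-- The exponential combinator `!P = rec X.(ω.0 + δ.P + γ.(X[l] | X[r]))`. -/
def bangProc (P : Proc) : Proc :=
  .fix (gsum3 ωAct Proc.nil ({Sum.inl 3} : Act) P ({Sum.inl 4} : Act)
    (.par (Proc.rename (.var 0) lRen) (Proc.rename (.var 0) rRen))
    (Finset.singleton_nonempty _) (Finset.singleton_nonempty _) (Finset.singleton_nonempty _))

/-- `P` diverges if there is an infinite sequence of `τ`-transitions from `P`. -/
def Diverges (P : Proc) : Prop :=
  ∃ f : ℕ → Proc, f 0 = P ∧ ∀ n, Step (f n) ∅ (f (n + 1))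

/-- `P ⊥ Q`: closing the system, `P` and `Q` interacting with each other yield no divergence. -/
def Orth (P Q : Proc) : Prop := ¬ Diverges ((Proc.par P Q).restrict Set.univ)

/-! ## Auxiliary lemmas for tensor injectivity -/

def lmap : Label → Label := Sum.map (fun n => 2 * n) (fun n => 2 * n)
def rmap : Label → Label := Sum.map (fun n => 2 * n + 1) (fun n => 2 * n + 1)

lemma lRen_toFun (x : Label) : lRen.toFun x = some (lmap x) := by
  cases x <;> rfl

lemma rRen_toFun (x : Label) : rRen.toFun x = some (rmap x) := by
  cases x <;> rfl

lemma lRen_total (l : Label) : (lRen.toFun l).isSome := by rw [lRen_toFun]; rfl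
lemma rRen_total (l : Label) : (rRen.toFun l).isSome := by rw [rRen_toFun]; rfl

lemma onAction_l (a : Act) : lRen.onAction a = a.image lmap := by
  ext y
  simp only [Renaming.onAction, Finset.mem_filterMap, Finset.mem_image, lRen_toFun,
    Option.some.injEq]

lemma onAction_r (a : Act) : rRen.onAction a = a.image rmap := by
  ext y
  simp only [Renaming.onAction, Finset.mem_filterMap, Finset.mem_image, rRen_toFun,
    Option.some.injEq]

lemma lmap_inj : Function.Injective lmap := by
  rintro (x | x) (y | y) h <;> simp only [lmap, Sum.map_inl, Sum.map_inr,
    Sum.inl.injEq, Sum.inr.injEq] at h <;> first | (exact congrArg _ (by omega)) | cases h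

lemma rmap_inj : Function.Injective rmap := by
  rintro (x | x) (y | y) h <;> simp only [rmap, Sum.map_inl, Sum.map_inr,
    Sum.inl.injEq, Sum.inr.injEq] at h <;> first | (exact congrArg _ (by omega)) | cases h

lemma name_lmap (x : Label) : (lmap x).name % 2 = 0 := by
  cases x <;> simp [lmap, Label.name]

lemma name_rmap (x : Label) : (rmap x).name % 2 = 1 := by
  cases x <;> simp [rmap, Label.name] <;> omega

lemma name_bar (x : Label) : (Label.bar x).name = x.name := by
  cases x <;> rfl

/-- In a tensor, the synchronizing part is forced to be empty. -/
lemma sync_empty {b : Act} {a₀ b₀ : Act}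
    (h1 : ∀ l ∈ b, l ∈ a₀.image lmap) (h2 : ∀ l ∈ b.image Label.bar, l ∈ b₀.image rmap) :
    b = ∅ := by
  rw [Finset.eq_empty_iff_forall_notMem]
  intro l hl
  have he : l.name % 2 = 0 := by
    obtain ⟨x, -, hx⟩ := Finset.mem_image.mp (h1 l hl)
    rw [← hx]; exact name_lmap x
  have ho : l.name % 2 = 1 := by
    have : Label.bar l ∈ b.image Label.bar := Finset.mem_image_of_mem _ hl
    obtain ⟨x, -, hx⟩ := Finset.mem_image.mp (h2 _ this)
    have := name_rmap x
    rw [hx, name_bar] at this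
    exact this
  omega

lemma rimage_empty_of_subset_l {a b : Act} (h : ∀ l ∈ b.image rmap, l ∈ a.image lmap) :
    b = ∅ := by
  rw [Finset.eq_empty_iff_forall_notMem]
  intro l hl
  have hm : rmap l ∈ b.image rmap := Finset.mem_image_of_mem _ hl
  obtain ⟨x, -, hx⟩ := Finset.mem_image.mp (h _ hm)
  have h1 := name_lmap x
  have h2 := name_rmap l
  rw [hx] at h1
  omega

lemma limage_empty_of_subset_r {a b : Act} (h : ∀ l ∈ b.image lmap, l ∈ a.image rmap) :
    b = ∅ := by
  rw [Finset.eq_empty_iff_forall_notMem]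
  intro l hl
  have hm : lmap l ∈ b.image lmap := Finset.mem_image_of_mem _ hl
  obtain ⟨x, -, hx⟩ := Finset.mem_image.mp (h _ hm)
  have h1 := name_rmap x
  have h2 := name_lmap l
  rw [hx] at h1
  omega

/-- Inversion for steps of a renamed process. -/
lemma step_rename_inv {P : Proc} {f : Renaming} {e : Act} {X : Proc}
    (h : Step (.rename P f) e X) :
    ∃ a P', Step P a P' ∧ e = f.onAction a ∧ X = .rename P' f := by
  cases h with
  | rename h' hs => exact ⟨_, _, h', rfl, rfl⟩

/-- Characterization of the steps of a tensor product. -/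
lemma step_tensor_inv {P Q : Proc} {e : Act} {T : Proc} (h : Step (tensor P Q) e T) :
    (∃ a P', Step P a P' ∧ e = a.image lmap ∧ T = tensor P' Q) ∨
    (∃ b Q', Step Q b Q' ∧ e = b.image rmap ∧ T = tensor P Q') ∨
    (∃ a b P' Q', Step P a P' ∧ Step Q b Q' ∧ e = a.image lmap ∪ b.image rmap ∧
      T = tensor P' Q') := by
  cases h with
  | parL h =>
    obtain ⟨a, P', hs, he, hT⟩ := step_rename_inv h
    exact Or.inl ⟨a, P', hs, by rw [he, onAction_l], by rw [hT]; rfl⟩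
  | parR h =>
    obtain ⟨b, Q', hs, he, hT⟩ := step_rename_inv h
    exact Or.inr (Or.inl ⟨b, Q', hs, by rw [he, onAction_r], by rw [hT]; rfl⟩)
  | @sync _ _ _ _ a b c hP hQ hab hbc hac =>
    obtain ⟨a₀, P', hsP, heP, hTP⟩ := step_rename_inv hP
    obtain ⟨b₀, Q', hsQ, heQ, hTQ⟩ := step_rename_inv hQ
    rw [onAction_l] at heP
    rw [onAction_r] at heQ
    have hb : b = ∅ := by
      refine sync_empty (b := b) (a₀ := a₀) (b₀ := b₀) ?_ ?_
      · intro l hl; rw [← heP]; exact Finset.mem_union_right _ hl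
      · intro l hl; rw [← heQ]; exact Finset.mem_union_left _ hl
    subst hb
    rw [Finset.union_empty] at heP
    rw [Finset.image_empty, Finset.empty_union] at heQ
    refine Or.inr (Or.inr ⟨a₀, b₀, P', Q', hsP, hsQ, ?_, ?_⟩)
    · rw [← heP, ← heQ]
    · rw [hTP, hTQ]; rfl

lemma step_tensor_left {P P' Q : Proc} {a : Act} (h : Step P a P') :
    Step (tensor P Q) (a.image lmap) (tensor P' Q) := by
  rw [← onAction_l]
  exact Step.parL (Step.rename h (fun l _ => lRen_total l))

lemma step_tensor_right {P Q Q' : Proc} {b : Act} (h : Step Q b Q') :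
    Step (tensor P Q) (b.image rmap) (tensor P Q') := by
  rw [← onAction_r]
  exact Step.parR (Step.rename h (fun l _ => rRen_total l))

lemma tauStar_tensor_inv {P Q T : Proc} (h : TauStar (tensor P Q) T) :
    ∃ P' Q', T = tensor P' Q' ∧ TauStar P P' ∧ TauStar Q Q' := by
  induction h with
  | refl => exact ⟨P, Q, rfl, Relation.ReflTransGen.refl, Relation.ReflTransGen.refl⟩
  | tail _ hstep ih =>
    obtain ⟨P', Q', rfl, hP, hQ⟩ := ih
    rcases step_tensor_inv hstep with ⟨a, P'', hs, he, rfl⟩ | ⟨b, Q'', hs, he, rfl⟩ |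
      ⟨a, b, P'', Q'', hsP, hsQ, he, rfl⟩
    · have ha : a = ∅ := Finset.image_eq_empty.mp he.symm
      subst ha
      exact ⟨P'', Q', rfl, hP.tail hs, hQ⟩
    · have hb : b = ∅ := Finset.image_eq_empty.mp he.symm
      subst hb
      exact ⟨P', Q'', rfl, hP, hQ.tail hs⟩
    · have := Finset.union_eq_empty.mp he.symm
      have ha : a = ∅ := Finset.image_eq_empty.mp this.1
      have hb : b = ∅ := Finset.image_eq_empty.mp this.2
      subst ha; subst hb
      exact ⟨P'', Q'', rfl, hP.tail hsP, hQ.tail hsQ⟩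

lemma tauStar_tensor_left {P P' Q : Proc} (h : TauStar P P') :
    TauStar (tensor P Q) (tensor P' Q) := by
  induction h with
  | refl => exact Relation.ReflTransGen.refl
  | tail _ hstep ih =>
    refine ih.tail ?_
    have := step_tensor_left (Q := Q) hstep
    rwa [Finset.image_empty] at this

lemma tauStar_tensor_right {P Q Q' : Proc} (h : TauStar Q Q') :
    TauStar (tensor P Q) (tensor P Q') := by
  induction h with
  | refl => exact Relation.ReflTransGen.refl
  | tail _ hstep ih =>
    refine ih.tail ?_
    have := step_tensor_right (P := P) hstep
    rwa [Finset.image_empty] at this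

lemma obs_tensor_left {P P' Q : Proc} {a : Act} (h : Obs P a P') :
    Obs (tensor P Q) (a.image lmap) (tensor P' Q) := by
  obtain ⟨M1, M2, h1, h2, h3⟩ := h
  exact ⟨tensor M1 Q, tensor M2 Q, tauStar_tensor_left h1, step_tensor_left h2,
    tauStar_tensor_left h3⟩

lemma obs_tensor_right {P Q Q' : Proc} {b : Act} (h : Obs Q b Q') :
    Obs (tensor P Q) (b.image rmap) (tensor P Q') := by
  obtain ⟨M1, M2, h1, h2, h3⟩ := h
  exact ⟨tensor P M1, tensor P M2, tauStar_tensor_right h1, step_tensor_right h2,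
    tauStar_tensor_right h3⟩

lemma obs_tensor_left_inv {P Q T : Proc} {a : Act} (hne : a.Nonempty)
    (h : Obs (tensor P Q) (a.image lmap) T) :
    ∃ P' Q', T = tensor P' Q' ∧ Obs P a P' ∧ TauStar Q Q' := by
  obtain ⟨M1, M2, h1, h2, h3⟩ := h
  obtain ⟨Pa, Qa, rfl, hPa, hQa⟩ := tauStar_tensor_inv h1
  rcases step_tensor_inv h2 with ⟨a₀, P'', hs, he, rfl⟩ | ⟨b₀, Q'', hs, he, rfl⟩ |
    ⟨a₀, b₀, P'', Q'', hsP, hsQ, he, rfl⟩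
  · have ha : a₀ = a := Finset.image_injective lmap_inj he.symm
    subst ha
    obtain ⟨P', Q', rfl, hP', hQ'⟩ := tauStar_tensor_inv h3
    exact ⟨P', Q', rfl, ⟨Pa, P'', hPa, hs, hP'⟩, hQa.trans hQ'⟩
  · exfalso
    have hb : a = ∅ := limage_empty_of_subset_r (a := b₀) (fun l hl => he ▸ hl)
    rw [hb] at hne; exact Finset.not_nonempty_empty hne
  · have hb : b₀ = ∅ := rimage_empty_of_subset_l (a := a)
      (fun l hl => by rw [he]; exact Finset.mem_union_right _ hl)
    subst hb
    rw [Finset.image_empty, Finset.union_empty] at he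
    have ha : a₀ = a := Finset.image_injective lmap_inj he.symm
    subst ha
    obtain ⟨P', Q', rfl, hP', hQ'⟩ := tauStar_tensor_inv h3
    exact ⟨P', Q', rfl, ⟨Pa, P'', hPa, hsP, hP'⟩, (hQa.tail hsQ).trans hQ'⟩

lemma obs_tensor_right_inv {P Q T : Proc} {b : Act} (hne : b.Nonempty)
    (h : Obs (tensor P Q) (b.image rmap) T) :
    ∃ P' Q', T = tensor P' Q' ∧ TauStar P P' ∧ Obs Q b Q' := by
  obtain ⟨M1, M2, h1, h2, h3⟩ := h
  obtain ⟨Pa, Qa, rfl, hPa, hQa⟩ := tauStar_tensor_inv h1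
  rcases step_tensor_inv h2 with ⟨a₀, P'', hs, he, rfl⟩ | ⟨b₀, Q'', hs, he, rfl⟩ |
    ⟨a₀, b₀, P'', Q'', hsP, hsQ, he, rfl⟩
  · exfalso
    have hb : b = ∅ := rimage_empty_of_subset_l (a := a₀) (fun l hl => he ▸ hl)
    rw [hb] at hne; exact Finset.not_nonempty_empty hne
  · have hb : b₀ = b := Finset.image_injective rmap_inj he.symm
    subst hb
    obtain ⟨P', Q', rfl, hP', hQ'⟩ := tauStar_tensor_inv h3
    exact ⟨P', Q', rfl, hPa.trans hP', ⟨Qa, Q'', hQa, hs, hQ'⟩⟩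
  · have ha : a₀ = ∅ := limage_empty_of_subset_r (a := b)
      (fun l hl => by rw [he]; exact Finset.mem_union_left _ hl)
    subst ha
    rw [Finset.image_empty, Finset.empty_union] at he
    have hb : b₀ = b := Finset.image_injective rmap_inj he.symm
    subst hb
    obtain ⟨P', Q', rfl, hP', hQ'⟩ := tauStar_tensor_inv h3
    exact ⟨P', Q', rfl, (hPa.tail hsP).trans hP', ⟨Qa, Q'', hQa, hsQ, hQ'⟩⟩

lemma WeakBisim.symm' {P Q : Proc} (h : WeakBisim P Q) : WeakBisim Q P := by
  obtain ⟨R, h1, h2, hr⟩ := h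
  exact ⟨fun x y => R y x, h2, h1, hr⟩

/-- The candidate relation for the left component. -/
def SL (x y : Proc) : Prop := ∃ u v, WeakBisim (tensor x u) (tensor y v)

/-- The candidate relation for the right component. -/
def SR (x y : Proc) : Prop := ∃ u v, WeakBisim (tensor u x) (tensor v y)

lemma SL_isWeakSim : IsWeakSim SL := by
  rintro P Q ⟨u, v, R0, hs, hs', hr⟩
  constructor
  · intro P' hP'
    obtain ⟨T', hT', hR⟩ := (hs hr).1 _ (tauStar_tensor_left hP')
    obtain ⟨Q', v', rfl, hQ', _⟩ := tauStar_tensor_inv hT'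
    exact ⟨Q', hQ', u, v', R0, hs, hs', hR⟩
  · intro a P' hane hobs
    obtain ⟨T', hT', hR⟩ := (hs hr).2 _ _ (hane.image lmap) (obs_tensor_left hobs)
    obtain ⟨Q', v', rfl, hQ', _⟩ := obs_tensor_left_inv hane hT'
    exact ⟨Q', hQ', u, v', R0, hs, hs', hR⟩

lemma SR_isWeakSim : IsWeakSim SR := by
  rintro P Q ⟨u, v, R0, hs, hs', hr⟩
  constructor
  · intro P' hP'
    obtain ⟨T', hT', hR⟩ := (hs hr).1 _ (tauStar_tensor_right hP')
    obtain ⟨v', Q', rfl, _, hQ'⟩ := tauStar_tensor_inv hT'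
    exact ⟨Q', hQ', u, v', R0, hs, hs', hR⟩
  · intro a P' hane hobs
    obtain ⟨T', hT', hR⟩ := (hs hr).2 _ _ (hane.image rmap) (obs_tensor_right hobs)
    obtain ⟨v', Q', rfl, _, hQ'⟩ := obs_tensor_right_inv hane hT'
    exact ⟨Q', hQ', u, v', R0, hs, hs', hR⟩

lemma SL_symm {x y : Proc} (h : SL x y) : SL y x := by
  obtain ⟨u, v, hb⟩ := h
  exact ⟨v, u, hb.symm'⟩

lemma SR_symm {x y : Proc} (h : SR x y) : SR y x := by
  obtain ⟨u, v, hb⟩ := h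
  exact ⟨v, u, hb.symm'⟩

lemma SL_flip_isWeakSim : IsWeakSim (fun x y => SL y x) := by
  intro P Q h
  obtain ⟨h1, h2⟩ := SL_isWeakSim (SL_symm h)
  refine ⟨fun P' hP' => ?_, fun a P' ha hobs => ?_⟩
  · obtain ⟨Q', hQ', hS⟩ := h1 P' hP'
    exact ⟨Q', hQ', SL_symm hS⟩
  · obtain ⟨Q', hQ', hS⟩ := h2 a P' ha hobs
    exact ⟨Q', hQ', SL_symm hS⟩

lemma SR_flip_isWeakSim : IsWeakSim (fun x y => SR y x) := by
  intro P Q h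
  obtain ⟨h1, h2⟩ := SR_isWeakSim (SR_symm h)
  refine ⟨fun P' hP' => ?_, fun a P' ha hobs => ?_⟩
  · obtain ⟨Q', hQ', hS⟩ := h1 P' hP'
    exact ⟨Q', hQ', SR_symm hS⟩
  · obtain ⟨Q', hQ', hS⟩ := h2 a P' ha hobs
    exact ⟨Q', hQ', SR_symm hS⟩

/-- **The tensor product of processes is injective up to weak bisimulation.** -/
theorem tensor_injective_weakBisim (P₁ P₂ Q₁ Q₂ : Proc)
    (h : WeakBisim (tensor P₁ P₂) (tensor Q₁ Q₂)) :
    WeakBisim P₁ Q₁ ∧ WeakBisim P₂ Q₂ := by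
  exact ⟨⟨SL, SL_isWeakSim, SL_flip_isWeakSim, P₂, Q₂, h⟩,
    ⟨SR, SR_isWeakSim, SR_flip_isWeakSim, P₁, Q₁, h⟩⟩
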